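/- Assume the x_{m,p} are integers with x_{m,p} ≥ 1 for all m, p, let ε > 0, and let b_p, n_p > 0 for p ∈ {1,…,P}. Then the family r ↦ (K(x,r,+) − K(x,r,−)) · ∏_{p=1}^P e^(−(Y_p + r_p)·ε) · (1 + b_p·(Y_p + r_p))^(−n_p) is absolutely summable over r ∈ ℕ^P, and ∫_{(ε,∞)^P} [∏_{m=1}^M e^(−y_m·(X_m·β)) / (1 + e^(−(X_m·β)))] · ∏_{p=1}^P G(β_p − ε; b_p, n_p) dβ = Σ_{r ∈ ℕ^P} (K(x,r,+) − K(x,r,−)) · ∏_{p=1}^P e^(−(Y_p + r_p)·ε) · (1 + b_p·(Y_p + r_p))^(−n_p). -/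

import Mathlib

open MeasureTheory

/-- The Gamma density with scale `b` and shape `n`:
`G(z; b, n) = (1/(b·Γ(n)))·(z/b)^(n−1)·e^(−z/b)` for `z > 0`, and `0` for `z ≤ 0`. -/
noncomputable def gammaDensity (b n z : ℝ) : ℝ :=
  if 0 < z then 1 / (b * Real.Gamma n) * (z / b) ^ (n - 1) * Real.exp (-(z / b)) else 0

/-- `K(x,r,+)`, the number of `k ∈ ℕ^M` with `Σ_m k_m·x_{m,p} = r_p` for all `p`
and `|k|` even. -/
noncomputable def Kplus {M P : ℕ} (x : Fin M → Fin P → ℕ) (r : Fin P → ℕ) : ℕ :=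
  Nat.card {k : Fin M → ℕ // (∀ p, ∑ m, k m * x m p = r p) ∧ Even (∑ m, k m)}

/-- `K(x,r,−)`, the number of `k ∈ ℕ^M` with `Σ_m k_m·x_{m,p} = r_p` for all `p`
and `|k|` odd. -/
noncomputable def Kminus {M P : ℕ} (x : Fin M → Fin P → ℕ) (r : Fin P → ℕ) : ℕ :=
  Nat.card {k : Fin M → ℕ // (∀ p, ∑ m, k m * x m p = r p) ∧ Odd (∑ m, k m)}

section Helpers

set_option maxHeartbeats 1000000

lemma gammaDensity_nonneg {b n : ℝ} (hb : 0 < b) (hn : 0 < n) (z : ℝ) :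
    0 ≤ gammaDensity b n z := by
  unfold gammaDensity
  split
  · have hΓ : 0 < Real.Gamma n := Real.Gamma_pos_of_pos hn
    have hzb : (0:ℝ) ≤ (z / b) ^ (n - 1) := Real.rpow_nonneg (by positivity) _
    positivity
  · exact le_refl 0

lemma measurable_gammaDensity (b n : ℝ) : Measurable (gammaDensity b n) := by
  unfold gammaDensity
  refine Measurable.ite measurableSet_Ioi ?_ measurable_const
  fun_prop

lemma key_single {b n ε c0 : ℝ} (hb : 0 < b) (hn : 0 < n) (hc : 0 ≤ c0) :
    Integrable ((Set.Ioi ε).indicator fun t => Real.exp (-(c0 * t)) * gammaDensity b n (t - ε)) ∧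
    ∫ t, (Set.Ioi ε).indicator (fun t => Real.exp (-(c0 * t)) * gammaDensity b n (t - ε)) t
      = Real.exp (-(c0 * ε)) * (1 + b * c0) ^ (-n) := by
  have hΓ : 0 < Real.Gamma n := Real.Gamma_pos_of_pos hn
  set r : ℝ := c0 + 1 / b with hrdef
  have hr : 0 < r := by positivity
  set K0 : ℝ := 1 / (b * Real.Gamma n) / b ^ (n - 1) with hK0
  have hbn : (0:ℝ) < b ^ (n - 1) := Real.rpow_pos_of_pos hb _
  -- pointwise identity on Ioi 0
  have hpt : ∀ s ∈ Set.Ioi (0:ℝ),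
      Real.exp (-(c0 * s)) * gammaDensity b n s = K0 * (s ^ (n - 1) * Real.exp (-(r * s))) := by
    intro s hs
    have hs0 : (0:ℝ) < s := hs
    have h1 : gammaDensity b n s
        = 1 / (b * Real.Gamma n) * (s / b) ^ (n - 1) * Real.exp (-(s / b)) := if_pos hs0
    have h2 : (s / b) ^ (n - 1) = s ^ (n - 1) / b ^ (n - 1) := Real.div_rpow hs0.le hb.le (n-1)
    have h3 : Real.exp (-(c0 * s)) * Real.exp (-(s / b)) = Real.exp (-(r * s)) := by
      rw [← Real.exp_add, hrdef]; ring_nf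
    rw [h1, h2]
    calc Real.exp (-(c0 * s)) * (1 / (b * Real.Gamma n) * (s ^ (n-1) / b ^ (n-1)) * Real.exp (-(s / b)))
        = (Real.exp (-(c0 * s)) * Real.exp (-(s / b))) * (1 / (b * Real.Gamma n) * (s ^ (n-1) / b ^ (n-1))) := by ring
      _ = K0 * (s ^ (n - 1) * Real.exp (-(r * s))) := by rw [h3, hK0]; ring
  -- base integrability
  have base : IntegrableOn (fun s : ℝ => s ^ (n - 1) * Real.exp (-(r * s))) (Set.Ioi 0) := by
    have h := integrableOn_rpow_mul_exp_neg_mul_rpow (s := n - 1) (p := 1) (b := r)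
      (by linarith) zero_lt_one hr
    simpa [Real.rpow_one] using h
  have hH0int : Integrable ((Set.Ioi (0:ℝ)).indicator
      fun s => Real.exp (-(c0 * s)) * gammaDensity b n s) := by
    rw [integrable_indicator_iff measurableSet_Ioi]
    exact IntegrableOn.congr_fun (base.const_mul K0) (fun s hs => (hpt s hs).symm) measurableSet_Ioi
  have hH0val : ∫ s, (Set.Ioi (0:ℝ)).indicator
      (fun s => Real.exp (-(c0 * s)) * gammaDensity b n s) s = (1 + b * c0) ^ (-n) := by
    rw [integral_indicator measurableSet_Ioi,
      setIntegral_congr_fun measurableSet_Ioi hpt, integral_const_mul,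
      Real.integral_rpow_mul_exp_neg_mul_Ioi hn hr]
    -- algebra: K0 * ((1/r)^n * Γ n) = (1 + b*c0)^(-n)
    have hbc : (0:ℝ) < 1 + b * c0 := by positivity
    have h1r : 1 / r = b / (1 + b * c0) := by
      rw [hrdef, div_eq_div_iff (by positivity) hbc.ne']
      field_simp [hb.ne']
      ring
    have hbn' : b ^ n = b ^ (n - 1) * b := by
      rw [← Real.rpow_add_one hb.ne' (n - 1), sub_add_cancel]
    rw [h1r, Real.div_rpow hb.le hbc.le, hK0, Real.rpow_neg hbc.le, hbn']
    have hbcn : (0:ℝ) < (1 + b * c0) ^ n := Real.rpow_pos_of_pos hbc _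
    field_simp [hb.ne', hΓ.ne', hbn.ne', hbcn.ne']
  -- translate
  have heq : ((Set.Ioi ε).indicator fun t => Real.exp (-(c0 * t)) * gammaDensity b n (t - ε))
      = fun t => (fun s => Real.exp (-(c0 * ε)) * ((Set.Ioi (0:ℝ)).indicator
          (fun s => Real.exp (-(c0 * s)) * gammaDensity b n s) s)) (t - ε) := by
    funext t
    by_cases ht : t ∈ Set.Ioi ε
    · have ht0 : t - ε ∈ Set.Ioi (0:ℝ) := by simp only [Set.mem_Ioi] at *; linarith
      simp only [Set.indicator_of_mem ht, Set.indicator_of_mem ht0]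
      rw [show -(c0 * t) = -(c0 * ε) + -(c0 * (t - ε)) by ring, Real.exp_add]
      ring
    · have ht0 : t - ε ∉ Set.Ioi (0:ℝ) := by
        simp only [Set.mem_Ioi] at *; linarith
      simp only [Set.indicator_of_notMem ht, Set.indicator_of_notMem ht0, mul_zero]
  constructor
  · rw [heq]
    exact (hH0int.const_mul _).comp_sub_right ε
  · rw [heq, integral_sub_right_eq_self, integral_const_mul, hH0val]

lemma hasSum_pi_prod : ∀ {M : ℕ} (f : Fin M → ℕ → ℝ) (a : Fin M → ℝ),
    (∀ i, Summable fun j => |f i j|) → (∀ i, HasSum (f i) (a i)) →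
    HasSum (fun k : Fin M → ℕ => ∏ i, f i (k i)) (∏ i, a i) ∧
      Summable fun k : Fin M → ℕ => |∏ i, f i (k i)| := by
  intro M
  induction M with
  | zero =>
    intro f a _ _
    have h1 : ∀ k : Fin 0 → ℕ, (∏ i, f i (k i)) = 1 := by intro k; simp
    have h2 : (∏ i, a i) = 1 := by simp
    constructor
    · rw [h2]
      have := hasSum_unique (fun k : Fin 0 → ℕ => ∏ i, f i (k i))
      rwa [h1] at this
    · exact ⟨1, by
        have := hasSum_unique (fun k : Fin 0 → ℕ => |∏ i, f i (k i)|)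
        rwa [h1, abs_one] at this⟩
  | succ M ih =>
    intro f a hnorm hsum
    obtain ⟨ihH, ihS⟩ := ih (fun i => f i.succ) (fun i => a i.succ)
      (fun i => hnorm i.succ) (fun i => hsum i.succ)
    have hS0 : Summable fun j => ‖f 0 j‖ := by simpa only [Real.norm_eq_abs] using hnorm 0
    have hS1 : Summable fun k : Fin M → ℕ => ‖∏ i, f i.succ (k i)‖ := by
      simpa only [Real.norm_eq_abs] using ihS
    have hprod : Summable fun p : ℕ × (Fin M → ℕ) => f 0 p.1 * ∏ i, f i.succ (p.2 i) := by
      have := summable_mul_of_summable_norm hS0 hS1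
      exact this
    have key : HasSum (fun p : ℕ × (Fin M → ℕ) => f 0 p.1 * ∏ i, f i.succ (p.2 i))
        (a 0 * ∏ i : Fin M, a i.succ) := by
      have := (hsum 0).mul ihH hprod
      exact this
    have hcomp : ∀ p : ℕ × (Fin M → ℕ),
        (∏ i, f i ((Fin.consEquiv fun _ => ℕ) p i)) = f 0 p.1 * ∏ i, f i.succ (p.2 i) := by
      intro p
      rw [Fin.prod_univ_succ]
      simp [Fin.consEquiv]
    constructor
    · rw [← Equiv.hasSum_iff (Fin.consEquiv fun _ => ℕ), Fin.prod_univ_succ]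
      convert key using 1
      funext p
      exact hcomp p
    · rw [← Equiv.summable_iff (Fin.consEquiv fun _ => ℕ)]
      have : Summable fun p : ℕ × (Fin M → ℕ) => |f 0 p.1 * ∏ i, f i.succ (p.2 i)| :=
        hprod.abs
      convert this using 1
      funext p
      simp only [Function.comp]
      rw [hcomp p]

def Tmap {M P : ℕ} (x : Fin M → Fin P → ℕ) (k : Fin M → ℕ) : Fin P → ℕ :=
  fun p => ∑ m, k m * x m p

lemma Tmap_fiber_finite {M P : ℕ} (hP : 1 ≤ P) (x : Fin M → Fin P → ℕ)
    (hx : ∀ m p, 1 ≤ x m p) (r : Fin P → ℕ) : (Tmap x ⁻¹' {r}).Finite := by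
  set p0 : Fin P := ⟨0, hP⟩
  apply Set.Finite.subset (Set.Finite.pi (fun m : Fin M => Set.finite_Iic (r p0)))
  intro k hk
  have hkr : Tmap x k = r := hk
  intro m _
  have h1 : k m ≤ k m * x m p0 := Nat.le_mul_of_pos_right _ (hx m p0)
  have h2 : k m * x m p0 ≤ ∑ m', k m' * x m' p0 :=
    Finset.single_le_sum (f := fun m' => k m' * x m' p0) (fun i _ => Nat.zero_le _)
      (Finset.mem_univ m)
  have h3 : (∑ m', k m' * x m' p0) = r p0 := congrFun hkr p0
  simp only [Set.mem_Iic]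
  omega

lemma fiber_sign_sum {M P : ℕ} (hP : 1 ≤ P) (x : Fin M → Fin P → ℕ)
    (hx : ∀ m p, 1 ≤ x m p) (r : Fin P → ℕ) :
    ∑' k : ↥(Tmap x ⁻¹' {r}), ((-1 : ℝ)) ^ (∑ m, (k : Fin M → ℕ) m)
      = (Kplus x r : ℝ) - (Kminus x r : ℝ) := by
  classical
  have hfin : (Tmap x ⁻¹' {r}).Finite := Tmap_fiber_finite hP x hx r
  haveI : Fintype ↥(Tmap x ⁻¹' {r}) := hfin.fintype
  have hmem : ∀ k : Fin M → ℕ, k ∈ Tmap x ⁻¹' {r} ↔ ∀ p, ∑ m, k m * x m p = r p := by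
    intro k
    simp only [Set.mem_preimage, Set.mem_singleton_iff, funext_iff]
    exact Iff.rfl
  -- Kplus as a filter card
  have hplus : Kplus x r
      = (Finset.univ.filter fun k : ↥(Tmap x ⁻¹' {r}) => Even (∑ m, (k : Fin M → ℕ) m)).card := by
    have hbij : Function.Bijective
        (fun q : {k : ↥(Tmap x ⁻¹' {r}) // Even (∑ m, (k : Fin M → ℕ) m)} =>
          (⟨q.1.1, (hmem q.1.1).mp q.1.2, q.2⟩ :
            {k : Fin M → ℕ // (∀ p, ∑ m, k m * x m p = r p) ∧ Even (∑ m, k m)})) := ?_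
    · rw [Kplus, ← Nat.card_eq_of_bijective _ hbij, Nat.card_eq_fintype_card,
        Fintype.card_subtype]
    constructor
    · rintro ⟨⟨k1, h1⟩, h2⟩ ⟨⟨k2, h3⟩, h4⟩ h
      simp only [Subtype.mk.injEq] at h ⊢
      exact h
    · rintro ⟨k, hk1, hk2⟩
      exact ⟨⟨⟨k, (hmem k).mpr hk1⟩, hk2⟩, rfl⟩
  have hminus : Kminus x r
      = (Finset.univ.filter fun k : ↥(Tmap x ⁻¹' {r}) => ¬ Even (∑ m, (k : Fin M → ℕ) m)).card := by
    have hbij : Function.Bijective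
        (fun q : {k : ↥(Tmap x ⁻¹' {r}) // ¬ Even (∑ m, (k : Fin M → ℕ) m)} =>
          (⟨q.1.1, (hmem q.1.1).mp q.1.2, Nat.not_even_iff_odd.mp q.2⟩ :
            {k : Fin M → ℕ // (∀ p, ∑ m, k m * x m p = r p) ∧ Odd (∑ m, k m)})) := ?_
    · rw [Kminus, ← Nat.card_eq_of_bijective _ hbij, Nat.card_eq_fintype_card,
        Fintype.card_subtype]
    constructor
    · rintro ⟨⟨k1, h1⟩, h2⟩ ⟨⟨k2, h3⟩, h4⟩ h
      simp only [Subtype.mk.injEq] at h ⊢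
      exact h
    · rintro ⟨k, hk1, hk2⟩
      exact ⟨⟨⟨k, (hmem k).mpr hk1⟩, Nat.not_even_iff_odd.mpr hk2⟩, rfl⟩
  rw [tsum_fintype]
  have : ∀ k : ↥(Tmap x ⁻¹' {r}), ((-1 : ℝ)) ^ (∑ m, (k : Fin M → ℕ) m)
      = if Even (∑ m, (k : Fin M → ℕ) m) then (1 : ℝ) else -1 := by
    intro k
    split
    · exact Even.neg_one_pow ‹_›
    · exact Odd.neg_one_pow (Nat.not_even_iff_odd.mp ‹_›)
  rw [Finset.sum_congr rfl fun k _ => this k, Finset.sum_ite, Finset.sum_const, Finset.sum_const,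
    hplus, hminus]
  push_cast
  ring

lemma logit_expand {M : ℕ} (u : Fin M → ℝ) (hu : ∀ m, 0 < u m) (yv : Fin M → ℝ) :
    HasSum (fun k : Fin M → ℕ =>
        (-1 : ℝ) ^ (∑ m, k m) * Real.exp (-(∑ m, (yv m + (k m : ℝ)) * u m)))
      (∏ m, Real.exp (-(yv m * u m)) / (1 + Real.exp (-(u m)))) := by
  set q : Fin M → ℝ := fun m => -Real.exp (-(u m)) with hqdef
  have hqlt : ∀ m, |q m| < 1 := by
    intro m
    rw [hqdef]
    simp only [abs_neg, abs_of_pos (Real.exp_pos _)]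
    exact Real.exp_lt_one_iff.mpr (by linarith [hu m])
  have key := hasSum_pi_prod (fun m j => Real.exp (-(yv m * u m)) * q m ^ j)
    (fun m => Real.exp (-(yv m * u m)) * (1 - q m)⁻¹)
    (fun m => by
      simp only [abs_mul, abs_pow]
      exact (summable_geometric_of_lt_one (abs_nonneg _) (hqlt m)).mul_left _)
    (fun m => (hasSum_geometric_of_norm_lt_one (ξ := q m)
      (by rw [Real.norm_eq_abs]; exact hqlt m)).mul_left _)
  have hfun : ∀ k : Fin M → ℕ,
      (∏ m, Real.exp (-(yv m * u m)) * q m ^ k m)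
        = (-1 : ℝ) ^ (∑ m, k m) * Real.exp (-(∑ m, (yv m + (k m : ℝ)) * u m)) := by
    intro k
    have h1 : ∀ m, Real.exp (-(yv m * u m)) * q m ^ k m
        = (-1 : ℝ) ^ k m * Real.exp (-((yv m + (k m : ℝ)) * u m)) := by
      intro m
      rw [hqdef]
      simp only
      rw [neg_pow, ← Real.exp_nat_mul]
      rw [show ((k m : ℝ)) * -(u m) = -((k m : ℝ) * u m) by ring]
      rw [mul_comm ((-1:ℝ) ^ k m) _, ← mul_assoc, ← Real.exp_add]
      rw [show -(yv m * u m) + -((k m : ℝ) * u m) = -((yv m + (k m : ℝ)) * u m) by ring]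
      ring
    rw [Finset.prod_congr rfl fun m _ => h1 m, Finset.prod_mul_distrib,
      Finset.prod_pow_eq_pow_sum, ← Real.exp_sum]
    congr 1
    rw [← Finset.sum_neg_distrib]
  have hval : (∏ m, Real.exp (-(yv m * u m)) * (1 - q m)⁻¹)
      = ∏ m, Real.exp (-(yv m * u m)) / (1 + Real.exp (-(u m))) := by
    apply Finset.prod_congr rfl
    intro m _
    rw [hqdef]
    simp only [sub_neg_eq_add]
    rw [div_eq_mul_inv]
  have := key.1
  rw [hval] at this
  exact funext hfun ▸ this

end Helpers

set_option maxHeartbeats 1000000 in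
/-- Exponentially convergent regrouped series expansion of the marginalized logit likelihood
against a product of independent `ε`-translated Gamma priors
(equation (25) of the paper, for one household). -/

theorem integral_logit_translated_gamma_eq_tsum_diophantine (M P : ℕ) (hM : 1 ≤ M) (hP : 1 ≤ P)
    (x : Fin M → Fin P → ℕ) (hx : ∀ m p, 1 ≤ x m p) (ε : ℝ) (hε : 0 < ε)
    (y : Fin M → ℝ) (hy : ∀ m, y m = 0 ∨ y m = 1)
    (b n : Fin P → ℝ) (hb : ∀ p, 0 < b p) (hn : ∀ p, 0 < n p) :
    Summable (fun r : Fin P → ℕ =>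
      |((Kplus x r : ℝ) - (Kminus x r : ℝ)) *
        ∏ p, Real.exp (-((∑ m, y m * x m p) + r p) * ε) *
          (1 + b p * ((∑ m, y m * x m p) + r p)) ^ (-(n p))|) ∧
    ∫ β in Set.univ.pi (fun _ : Fin P => Set.Ioi ε),
        (∏ m, Real.exp (-(y m * ∑ p, (x m p : ℝ) * β p)) /
            (1 + Real.exp (-(∑ p, (x m p : ℝ) * β p)))) *
          ∏ p, gammaDensity (b p) (n p) (β p - ε)
      = ∑' r : Fin P → ℕ,
          ((Kplus x r : ℝ) - (Kminus x r : ℝ)) *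
            ∏ p, Real.exp (-((∑ m, y m * x m p) + r p) * ε) *
              (1 + b p * ((∑ m, y m * x m p) + r p)) ^ (-(n p)) := by
  classical
  haveI : Nonempty (Fin P) := ⟨⟨0, hP⟩⟩
  -- notation
  set Y : Fin P → ℝ := fun p => ∑ m, y m * x m p with hYdef
  have hY0 : ∀ p, 0 ≤ Y p := by
    intro p
    apply Finset.sum_nonneg
    intro m _
    rcases hy m with h | h <;> rw [h] <;> positivity
  set c : (Fin M → ℕ) → Fin P → ℝ := fun k p => Y p + (Tmap x k p : ℝ) with hcdef
  have hc0 : ∀ k p, 0 ≤ c k p := fun k p => add_nonneg (hY0 p) (Nat.cast_nonneg _)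
  set g1 : Fin P → ℝ → ℝ → ℝ := fun p c0 =>
    (Set.Ioi ε).indicator fun t => Real.exp (-(c0 * t)) * gammaDensity (b p) (n p) (t - ε)
    with hg1def
  have hg1int : ∀ p (c0 : ℝ), 0 ≤ c0 → Integrable (g1 p c0) :=
    fun p c0 h => (key_single (hb p) (hn p) h).1
  have hg1val : ∀ p (c0 : ℝ), 0 ≤ c0 →
      ∫ t, g1 p c0 t = Real.exp (-(c0 * ε)) * (1 + b p * c0) ^ (-(n p)) :=
    fun p c0 h => (key_single (hb p) (hn p) h).2
  have hg1nonneg : ∀ p (c0 t : ℝ), 0 ≤ g1 p c0 t := by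
    intro p c0 t
    apply Set.indicator_nonneg
    intro s _
    exact mul_nonneg (Real.exp_pos _).le (gammaDensity_nonneg (hb p) (hn p) _)
  set F : (Fin M → ℕ) → (Fin P → ℝ) → ℝ :=
    fun k β => (-1 : ℝ) ^ (∑ m, k m) * ∏ p, g1 p (c k p) (β p) with hFdef
  set w : (Fin M → ℕ) → ℝ :=
    fun k => ∏ p, Real.exp (-(c k p * ε)) * (1 + b p * c k p) ^ (-(n p)) with hwdef
  have hwnonneg : ∀ k, 0 ≤ w k := by
    intro k
    apply Finset.prod_nonneg
    intro p _
    have h1 : (0:ℝ) < 1 + b p * c k p := by nlinarith [hb p, hc0 k p]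
    exact mul_nonneg (Real.exp_pos _).le (Real.rpow_nonneg h1.le _)
  -- integrability of each F k
  have hFk_int : ∀ k, Integrable (F k) := by
    intro k
    apply Integrable.const_mul
    exact Integrable.fintype_prod (f := fun p => g1 p (c k p)) (fun p => hg1int p _ (hc0 k p))
  -- norm integral of F k equals w k
  have hFnorm : ∀ k, (∫ β, ‖F k β‖) = w k := by
    intro k
    have h1 : ∀ β : Fin P → ℝ, ‖F k β‖ = ∏ p, g1 p (c k p) (β p) := by
      intro β
      rw [hFdef]
      simp only [norm_mul, norm_pow, norm_neg, norm_one, one_pow, one_mul]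
      rw [Real.norm_eq_abs, Finset.abs_prod]
      exact Finset.prod_congr rfl fun p _ => abs_of_nonneg (hg1nonneg p _ _)
    rw [show (fun β => ‖F k β‖) = fun β => ∏ p, g1 p (c k p) (β p) from funext h1]
    rw [MeasureTheory.volume_pi, MeasureTheory.integral_fintype_prod_eq_prod (𝕜 := ℝ)
      (f := fun p => g1 p (c k p))]
    exact Finset.prod_congr rfl fun p _ => hg1val p _ (hc0 k p)
  -- value of the integral of F k
  have hFval : ∀ k, (∫ β, F k β) = (-1 : ℝ) ^ (∑ m, k m) * w k := by
    intro k
    rw [hFdef]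
    rw [MeasureTheory.integral_const_mul]
    rw [MeasureTheory.volume_pi, MeasureTheory.integral_fintype_prod_eq_prod (𝕜 := ℝ)
      (f := fun p => g1 p (c k p))]
    rw [hwdef]
    congr 1
    exact Finset.prod_congr rfl fun p _ => hg1val p _ (hc0 k p)
  -- summability of w
  have hgeo : Summable (fun k : Fin M → ℕ => Real.exp (-ε) ^ (∑ m, k m)) := by
    have hq : |Real.exp (-ε)| < 1 := by
      rw [abs_of_pos (Real.exp_pos _)]
      exact Real.exp_lt_one_iff.mpr (by linarith)
    have h := hasSum_pi_prod (M := M) (fun _ j => Real.exp (-ε) ^ j)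
      (fun _ => (1 - Real.exp (-ε))⁻¹)
      (fun i => by
        simp only [abs_pow]
        exact summable_geometric_of_lt_one (abs_nonneg _) hq)
      (fun i => hasSum_geometric_of_norm_lt_one (ξ := Real.exp (-ε)) (by rwa [Real.norm_eq_abs]))
    have h2 := h.1.summable
    apply h2.congr
    intro k
    rw [← Finset.prod_pow_eq_pow_sum]
  have hwsum : Summable w := by
    apply Summable.of_nonneg_of_le hwnonneg _ hgeo
    intro k
    set p0 : Fin P := ⟨0, hP⟩
    have hcb : ((∑ m, k m : ℕ) : ℝ) ≤ c k p0 := by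
      have h1 : (∑ m, k m) ≤ Tmap x k p0 := by
        apply Finset.sum_le_sum
        intro m _
        exact Nat.le_mul_of_pos_right _ (hx m p0)
      have h2 : (Tmap x k p0 : ℝ) ≤ c k p0 := by
        rw [hcdef]
        simp only
        linarith [hY0 p0]
      calc ((∑ m, k m : ℕ) : ℝ) ≤ (Tmap x k p0 : ℝ) := by exact_mod_cast h1
        _ ≤ c k p0 := h2
    calc w k ≤ ∏ p, (if p = p0 then Real.exp (-ε) ^ (∑ m, k m) else 1) := by
          apply Finset.prod_le_prod
          · intro p _
            have hbase : (0:ℝ) < 1 + b p * c k p := by nlinarith [hb p, hc0 k p]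
            exact mul_nonneg (Real.exp_pos _).le (Real.rpow_nonneg hbase.le _)
          · intro p _
            have hcp := hc0 k p
            have hbase : (0:ℝ) < 1 + b p * c k p := by nlinarith [hb p, hc0 k p]
            have h1 : (1 + b p * c k p) ^ (-(n p)) ≤ 1 := by
              apply Real.rpow_le_one_of_one_le_of_nonpos
              · nlinarith [hb p]
              · linarith [hn p]
            have h2 : Real.exp (-(c k p * ε)) ≤ 1 := by
              rw [Real.exp_le_one_iff]
              nlinarith
            split
            · rename_i hpp0
              have hcb' : ((∑ m, k m : ℕ) : ℝ) ≤ c k p := by rw [hpp0]; exact hcb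
              have h3 : Real.exp (-(c k p * ε)) ≤ Real.exp (-ε) ^ (∑ m, k m) := by
                rw [← Real.exp_nat_mul]
                apply Real.exp_le_exp.mpr
                have he : ((∑ m, k m : ℕ) : ℝ) * (-ε) = -(((∑ m, k m : ℕ) : ℝ) * ε) := by ring
                rw [he]
                apply neg_le_neg
                apply mul_le_mul_of_nonneg_right hcb' hε.le
              calc Real.exp (-(c k p * ε)) * (1 + b p * c k p) ^ (-(n p))
                  ≤ Real.exp (-(c k p * ε)) * 1 := by
                    apply mul_le_mul_of_nonneg_left h1 (Real.exp_pos _).le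
                _ = Real.exp (-(c k p * ε)) := mul_one _
                _ ≤ _ := h3
            · calc Real.exp (-(c k p * ε)) * (1 + b p * c k p) ^ (-(n p))
                  ≤ 1 * 1 := by
                    apply mul_le_mul h2 h1 (Real.rpow_nonneg hbase.le _) zero_le_one
                _ = 1 := mul_one 1
      _ = Real.exp (-ε) ^ (∑ m, k m) := by
          rw [Finset.prod_ite_eq' Finset.univ p0 (fun _ => Real.exp (-ε) ^ (∑ m, k m))]
          simp
  -- the integrand
  set S : Set (Fin P → ℝ) := Set.univ.pi fun _ : Fin P => Set.Ioi ε with hSdef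
  have hSmeas : MeasurableSet S := MeasurableSet.univ_pi fun _ => measurableSet_Ioi
  have hpoint : ∀ β : Fin P → ℝ,
      S.indicator (fun β => (∏ m, Real.exp (-(y m * ∑ p, (x m p : ℝ) * β p)) /
          (1 + Real.exp (-(∑ p, (x m p : ℝ) * β p)))) *
        ∏ p, gammaDensity (b p) (n p) (β p - ε)) β = ∑' k : Fin M → ℕ, F k β := by
    intro β
    by_cases hβ : β ∈ S
    · have hβp : ∀ p, β p ∈ Set.Ioi ε := by
        intro p
        have := hβ
        rw [hSdef, Set.mem_univ_pi] at this
        exact this p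
      rw [Set.indicator_of_mem hβ]
      set u : Fin M → ℝ := fun m => ∑ p, (x m p : ℝ) * β p with hudef
      have hu : ∀ m, 0 < u m := by
        intro m
        rw [hudef]
        apply Finset.sum_pos
        · intro p _
          have h1 : (1:ℝ) ≤ (x m p : ℝ) := by exact_mod_cast hx m p
          have h2 : ε < β p := hβp p
          nlinarith
        · exact Finset.univ_nonempty
      set C : ℝ := ∏ p, gammaDensity (b p) (n p) (β p - ε) with hCdef
      have hexp := (logit_expand u hu y).mul_right C
      have hFkb : ∀ k : Fin M → ℕ, F k β
          = ((-1 : ℝ) ^ (∑ m, k m) * Real.exp (-(∑ m, (y m + (k m : ℝ)) * u m))) * C := by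
        intro k
        rw [hFdef]
        simp only
        have hg1b : ∀ p, g1 p (c k p) (β p)
            = Real.exp (-(c k p * β p)) * gammaDensity (b p) (n p) (β p - ε) := by
          intro p
          rw [hg1def]
          exact Set.indicator_of_mem (hβp p) _
        rw [Finset.prod_congr rfl fun p _ => hg1b p, Finset.prod_mul_distrib, ← Real.exp_sum]
        rw [← hCdef]
        have hsum1 : (∑ p, -(c k p * β p)) = -(∑ m, (y m + (k m : ℝ)) * u m) := by
          rw [hcdef, Finset.sum_neg_distrib]
          congr 1
          simp only
          have hswap : (∑ p, (Y p + (Tmap x k p : ℝ)) * β p)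
              = ∑ p, ∑ m, (y m + (k m : ℝ)) * ((x m p : ℝ) * β p) := by
            apply Finset.sum_congr rfl
            intro p _
            rw [hYdef]
            simp only [Tmap]
            push_cast
            rw [← Finset.sum_add_distrib, Finset.sum_mul]
            apply Finset.sum_congr rfl
            intro m _
            ring
          rw [hswap, Finset.sum_comm]
          apply Finset.sum_congr rfl
          intro m _
          rw [hudef]
          simp only
          rw [Finset.mul_sum]
        rw [hsum1]
        ring
      rw [tsum_congr hFkb, hexp.tsum_eq]
    · obtain ⟨p0, hp0⟩ : ∃ p, β p ∉ Set.Ioi ε := by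
        by_contra h
        push_neg at h
        exact hβ (Set.mem_univ_pi.mpr h)
      have hFz : ∀ k, F k β = 0 := by
        intro k
        rw [hFdef]
        simp only
        rw [Finset.prod_eq_zero (Finset.mem_univ p0), mul_zero]
        rw [hg1def]
        exact Set.indicator_of_notMem hp0 _
      rw [Set.indicator_of_notMem hβ, tsum_congr hFz, tsum_zero]
  -- main integral identity
  have hnormsum : Summable (fun k : Fin M → ℕ => ∫ β, ‖F k β‖) :=
    hwsum.congr fun k => (hFnorm k).symm
  have hmain : (∫ β in S, (∏ m, Real.exp (-(y m * ∑ p, (x m p : ℝ) * β p)) /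
          (1 + Real.exp (-(∑ p, (x m p : ℝ) * β p)))) *
        ∏ p, gammaDensity (b p) (n p) (β p - ε))
      = ∑' k : Fin M → ℕ, ((-1 : ℝ) ^ (∑ m, k m) * w k) := by
    rw [← integral_indicator hSmeas]
    rw [show (S.indicator (fun β => (∏ m, Real.exp (-(y m * ∑ p, (x m p : ℝ) * β p)) /
          (1 + Real.exp (-(∑ p, (x m p : ℝ) * β p)))) *
        ∏ p, gammaDensity (b p) (n p) (β p - ε)))
      = fun β => ∑' k : Fin M → ℕ, F k β from funext hpoint]
    rw [← MeasureTheory.integral_tsum_of_summable_integral_norm hFk_int hnormsum]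
    exact tsum_congr hFval
  -- regrouping along fibers of Tmap
  have hsumf : Summable (fun k : Fin M → ℕ => (-1 : ℝ) ^ (∑ m, k m) * w k) := by
    have habs : (fun k : Fin M → ℕ => |(-1 : ℝ) ^ (∑ m, k m) * w k|) = w := by
      funext k
      rw [abs_mul, abs_pow, abs_neg, abs_one, one_pow, one_mul, abs_of_nonneg (hwnonneg k)]
    exact Summable.of_abs (by rw [habs]; exact hwsum)
  have hfib := hsumf.hasSum.tsum_fiberwise (Tmap x)
  have hinner : ∀ r : Fin P → ℕ,
      (∑' k : ↥(Tmap x ⁻¹' {r}), ((-1 : ℝ) ^ (∑ m, (k : Fin M → ℕ) m) * w (k : Fin M → ℕ)))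
        = ((Kplus x r : ℝ) - (Kminus x r : ℝ)) *
            ∏ p, Real.exp (-(Y p + (r p : ℝ)) * ε) * (1 + b p * (Y p + (r p : ℝ))) ^ (-(n p)) := by
    intro r
    have hwk : ∀ k : ↥(Tmap x ⁻¹' {r}), w (k : Fin M → ℕ)
        = ∏ p, Real.exp (-(Y p + (r p : ℝ)) * ε) * (1 + b p * (Y p + (r p : ℝ))) ^ (-(n p)) := by
      intro k
      have hk : Tmap x (k : Fin M → ℕ) = r := k.2
      rw [hwdef]
      apply Finset.prod_congr rfl
      intro p _
      have hcp : c (k : Fin M → ℕ) p = Y p + (r p : ℝ) := by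
        rw [hcdef]
        simp only
        rw [hk]
      rw [hcp, neg_mul]
    calc (∑' k : ↥(Tmap x ⁻¹' {r}), ((-1 : ℝ) ^ (∑ m, (k : Fin M → ℕ) m) * w (k : Fin M → ℕ)))
        = ∑' k : ↥(Tmap x ⁻¹' {r}), ((-1 : ℝ) ^ (∑ m, (k : Fin M → ℕ) m) *
            ∏ p, Real.exp (-(Y p + (r p : ℝ)) * ε) * (1 + b p * (Y p + (r p : ℝ))) ^ (-(n p))) :=
          tsum_congr fun k => by rw [hwk k]
      _ = (∑' k : ↥(Tmap x ⁻¹' {r}), (-1 : ℝ) ^ (∑ m, (k : Fin M → ℕ) m)) *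
            ∏ p, Real.exp (-(Y p + (r p : ℝ)) * ε) * (1 + b p * (Y p + (r p : ℝ))) ^ (-(n p)) :=
          tsum_mul_right
      _ = _ := by rw [fiber_sign_sum hP x hx r]
  constructor
  · apply Summable.abs
    exact hfib.summable.congr fun r => hinner r
  · rw [hmain, ← hfib.tsum_eq]
    exact tsum_congr hinner
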